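/- Let f0 : (0,∞) → [0,∞) be a C¹, integrable function with ∫₀^∞ f0(y) dy = 1, set ρ(t) = ∫_t^∞ f0(y) dy, and let T > 0 satisfy ρ(T) > 0. Suppose g : (0,∞) × [0,T] → [0,∞) is C¹, with g(·,t) integrable and ∫₀^∞ g(y,t) dy > 0 for every t ∈ [0,T], g(·,0) = f0, and ∂_t g(x,t) − ∂_x g(x,t) = −(g(0,t)/∫₀^∞ g(y,t) dy) · g(x,t) for all x > 0 and t ∈ (0,T). Then g(x,t) = ρ(t) f0(x+t) for all x > 0 and t ∈ [0,T]. -/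

import Mathlib

open MeasureTheory Set

/-- Translation invariance for set integrals over `Ioi`. -/
lemma integral_Ioi_comp_add_right' (f : ℝ → ℝ) (t : ℝ) :
    ∫ y in Ioi (0:ℝ), f (y + t) = ∫ y in Ioi t, f y := by
  have A : MeasurableEmbedding fun x : ℝ => x + t :=
    (Homeomorph.addRight t).isClosedEmbedding.measurableEmbedding
  have h1 : ∫ y in Ioi t, f y = ∫ y in Ioi t, f y ∂(Measure.map (· + t) volume) := by
    rw [map_add_right_eq_self]
  rw [h1, A.setIntegral_map]
  have h2 : (fun x : ℝ => x + t) ⁻¹' Ioi t = Ioi 0 := by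
    ext x; simp
  rw [h2]

/-- Two solutions of the same scalar linear ODE are proportional, provided the
reference solution is positive. -/
lemma ratio_const {u v k : ℝ → ℝ} {a b : ℝ} (hab : a < b)
    (hu : ContinuousOn u (Icc a b)) (hv : ContinuousOn v (Icc a b))
    (hu' : ∀ s ∈ Ioo a b, HasDerivAt u (k s * u s) s)
    (hv' : ∀ s ∈ Ioo a b, HasDerivAt v (k s * v s) s)
    (hvpos : ∀ s ∈ Icc a b, 0 < v s) :
    u b * v a = u a * v b := by
  set q : ℝ → ℝ := fun s => u s / v s with hqdef
  have hqc : ContinuousOn q (Icc a b) :=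
    hu.div hv fun s hs => (hvpos s hs).ne'
  have hq' : ∀ s ∈ Ioo a b, HasDerivAt q 0 s := by
    intro s hs
    have hvne : v s ≠ 0 := (hvpos s (Ioo_subset_Icc_self hs)).ne'
    have h := (hu' s hs).div (hv' s hs) hvne
    convert h using 1
    · rfl
    · rfl
    · rfl
    ring
  have key : ∀ a' ∈ Ioo a b, q b = q a' := by
    intro a' ha'
    have hc : ContinuousOn q (Icc a' b) :=
      hqc.mono (Icc_subset_Icc ha'.1.le le_rfl)
    have hd : ∀ x ∈ Ico a' b, HasDerivWithinAt q 0 (Ici x) x := by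
      intro x hx
      exact (hq' x ⟨lt_of_lt_of_le ha'.1 hx.1, hx.2⟩).hasDerivWithinAt
    exact constant_of_has_deriv_right_zero hc hd b (right_mem_Icc.2 ha'.2.le)
  have hne : (nhdsWithin a (Ioo a b)).NeBot := by
    rw [nhdsWithin_Ioo_eq_nhdsGT hab]; infer_instance
  have h1 : Filter.Tendsto q (nhdsWithin a (Ioo a b)) (nhds (q a)) :=
    ((hqc a (left_mem_Icc.2 hab.le)).mono Ioo_subset_Icc_self)
  have h2 : Filter.Tendsto q (nhdsWithin a (Ioo a b)) (nhds (q b)) := by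
    refine Filter.Tendsto.congr' ?_ tendsto_const_nhds
    filter_upwards [self_mem_nhdsWithin] with s hs
    exact key s hs
  have hqq : q a = q b := tendsto_nhds_unique h1 h2
  have hva : v a ≠ 0 := (hvpos a (left_mem_Icc.2 hab.le)).ne'
  have hvb : v b ≠ 0 := (hvpos b (right_mem_Icc.2 hab.le)).ne'
  have h3 : u a / v a = u b / v b := hqq
  rw [div_eq_div_iff hva hvb] at h3
  linarith

/-- uniqueness for the kinetic equation.
If `g` is a nonnegative `C¹` solution on `(0,∞) × [0,T]` of
`∂_t g − ∂_x g = −(g(0,t)/∫_0^∞ g(y,t) dy) g(x,t)` with positive mass,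
initial data `f0` and boundary value `g 0 t` given by continuous extension,
and `ρ T > 0`, then `g x t = ρ t * f0 (x + t)`. -/
theorem kinetic_equation_uniqueness
    (f0 : ℝ → ℝ)
    (hf0nonneg : ∀ x ∈ Ioi (0:ℝ), 0 ≤ f0 x)
    (hf0C1 : ContDiffOn ℝ 1 f0 (Ioi 0))
    (hf0int : IntegrableOn f0 (Ioi 0))
    (hf0norm : ∫ y in Ioi (0:ℝ), f0 y = 1)
    (ρ : ℝ → ℝ) (hρ : ∀ t, ρ t = ∫ y in Ioi t, f0 y)
    (T : ℝ) (hT : 0 < T) (hρT : 0 < ρ T)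
    (g : ℝ → ℝ → ℝ)
    (hgnonneg : ∀ x ∈ Ioi (0:ℝ), ∀ t ∈ Icc (0:ℝ) T, 0 ≤ g x t)
    (hgC1 : ContDiffOn ℝ 1 (fun p : ℝ × ℝ => g p.1 p.2) (Ioi 0 ×ˢ Icc 0 T))
    (hgint : ∀ t ∈ Icc (0:ℝ) T, IntegrableOn (fun x => g x t) (Ioi 0))
    (hgmass : ∀ t ∈ Icc (0:ℝ) T, 0 < ∫ y in Ioi (0:ℝ), g y t)
    (hbdry : ∀ t ∈ Icc (0:ℝ) T, ContinuousWithinAt (fun x => g x t) (Ioi 0) 0)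
    (hinit : ∀ x ∈ Ioi (0:ℝ), g x 0 = f0 x)
    (hpde : ∀ x ∈ Ioi (0:ℝ), ∀ t ∈ Ioo (0:ℝ) T,
      deriv (fun s => g x s) t - deriv (fun y => g y t) x
        = -(g 0 t / ∫ y in Ioi (0:ℝ), g y t) * g x t) :
    ∀ x ∈ Ioi (0:ℝ), ∀ t ∈ Icc (0:ℝ) T, g x t = ρ t * f0 (x + t) := by
  -- basic facts about ρ
  have hρ0 : ρ 0 = 1 := by rw [hρ]; exact hf0norm
  have hρdec : ∀ a b : ℝ, 0 ≤ a → a ≤ b → ρ a = ρ b + ∫ y in Ioc a b, f0 y := by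
    intro a b ha hab
    have h1 : IntegrableOn f0 (Ioc a b) :=
      hf0int.mono_set fun x hx => lt_of_le_of_lt ha hx.1
    have h2 : IntegrableOn f0 (Ioi b) :=
      hf0int.mono_set fun x hx => lt_of_le_of_lt (ha.trans hab) hx
    have h3 := setIntegral_union (μ := volume) (f := f0)
      Ioc_disjoint_Ioi_same measurableSet_Ioi h1 h2
    rw [hρ a, hρ b, ← Ioc_union_Ioi_eq_Ioi hab, h3]
    ring
  have hρpos : ∀ s ∈ Icc (0:ℝ) T, 0 < ρ s := by
    intro s hs
    have h1 := hρdec s T hs.1 hs.2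
    have h2 : 0 ≤ ∫ y in Ioc s T, f0 y :=
      setIntegral_nonneg measurableSet_Ioc fun x hx =>
        hf0nonneg x (lt_of_le_of_lt hs.1 hx.1)
    linarith
  have hf0intIcc : IntegrableOn f0 (Icc 0 T) := by
    rw [integrableOn_Icc_iff_integrableOn_Ioc]
    exact hf0int.mono_set fun x hx => hx.1
  have hρcont : ContinuousOn ρ (Icc 0 T) := by
    have h1 : ContinuousOn (fun s => 1 - ∫ y in Ioc (0:ℝ) s, f0 y) (Icc 0 T) :=
      continuousOn_const.sub (intervalIntegral.continuousOn_primitive hf0intIcc)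
    apply h1.congr
    intro s hs
    have h2 := hρdec 0 s le_rfl hs.1
    rw [hρ0] at h2
    show ρ s = 1 - ∫ y in Ioc (0:ℝ) s, f0 y
    linarith
  have hρderiv : ∀ s ∈ Ioo (0:ℝ) T, HasDerivAt ρ (-f0 s) s := by
    intro s hs
    have hhalf : 0 < s / 2 := by linarith [hs.1]
    have hint : IntervalIntegrable f0 volume (s / 2) s := by
      apply IntegrableOn.intervalIntegrable
      apply hf0int.mono_set
      intro x hx
      have := hx.1
      rw [uIcc_of_le (by linarith [hs.1])] at hx
      exact lt_of_lt_of_le hhalf hx.1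
    have hmeas : StronglyMeasurableAtFilter f0 (nhds s) volume :=
      ContinuousOn.stronglyMeasurableAtFilter isOpen_Ioi hf0C1.continuousOn s hs.1
    have hcont : ContinuousAt f0 s :=
      (hf0C1.continuousOn s hs.1).continuousAt (isOpen_Ioi.mem_nhds hs.1)
    have hFTC : HasDerivAt (fun u => ∫ y in (s/2)..u, f0 y) (f0 s) s :=
      intervalIntegral.integral_hasDerivAt_right hint hmeas hcont
    have hF : HasDerivAt (fun u => ρ (s/2) - ∫ y in (s/2)..u, f0 y) (-f0 s) s :=
      hFTC.const_sub _
    apply hF.congr_of_eventuallyEq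
    filter_upwards [isOpen_Ioi.mem_nhds (show s ∈ Ioi (s/2) by simp [Ioi]; linarith [hs.1])]
      with u hu
    have hu' : s / 2 ≤ u := le_of_lt hu
    have := hρdec (s/2) u hhalf.le hu'
    rw [intervalIntegral.integral_of_le hu']
    linarith
  -- continuity of g along set
  have hGcont : ContinuousOn (fun p : ℝ × ℝ => g p.1 p.2) (Ioi 0 ×ˢ Icc 0 T) :=
    hgC1.continuousOn
  -- chain rule along characteristics
  have hchain : ∀ c s : ℝ, s < c → s ∈ Ioo 0 T →
      HasDerivAt (fun r => g (c - r) r)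
        (-(g 0 s / ∫ y in Ioi (0:ℝ), g y s) * g (c - s) s) s := by
    intro c s hsc hs
    have hx : (0:ℝ) < c - s := by linarith
    have hmem : (Ioi 0 ×ˢ Icc 0 T : Set (ℝ × ℝ)) ∈ nhds ((c - s, s) : ℝ × ℝ) := by
      apply Filter.mem_of_superset
        ((isOpen_Ioi.prod isOpen_Ioo).mem_nhds (show (c - s, s) ∈ Ioi 0 ×ˢ Ioo 0 T from ⟨hx, hs⟩))
      exact prod_mono (subset_refl _) Ioo_subset_Icc_self
    have hca : ContDiffAt ℝ 1 (fun p : ℝ × ℝ => g p.1 p.2) (c - s, s) :=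
      hgC1.contDiffAt hmem
    have hdiff : HasFDerivAt (fun p : ℝ × ℝ => g p.1 p.2)
        (fderiv ℝ (fun p : ℝ × ℝ => g p.1 p.2) (c - s, s)) (c - s, s) :=
      (hca.differentiableAt one_ne_zero).hasFDerivAt
    set D := fderiv ℝ (fun p : ℝ × ℝ => g p.1 p.2) (c - s, s) with hD
    have hpx : HasDerivAt (fun y => g y s) (D (1, 0)) (c - s) := by
      have h1 : HasDerivAt (fun y : ℝ => ((y, s) : ℝ × ℝ)) ((1 : ℝ), (0 : ℝ)) (c - s) :=
        (hasDerivAt_id _).prodMk (hasDerivAt_const _ _)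
      exact HasFDerivAt.comp_hasDerivAt (c - s) hdiff h1
    have hpt : HasDerivAt (fun τ => g (c - s) τ) (D (0, 1)) s := by
      have h1 : HasDerivAt (fun τ : ℝ => ((c - s, τ) : ℝ × ℝ)) ((0 : ℝ), (1 : ℝ)) s :=
        (hasDerivAt_const _ _).prodMk (hasDerivAt_id _)
      exact HasFDerivAt.comp_hasDerivAt s hdiff h1
    have hcomp : HasDerivAt (fun r => g (c - r) r) (D (-1, 1)) s := by
      have h1 : HasDerivAt (fun r : ℝ => ((c - r, r) : ℝ × ℝ)) ((-1 : ℝ), (1 : ℝ)) s :=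
        ((hasDerivAt_id s).const_sub c).prodMk (hasDerivAt_id s)
      exact HasFDerivAt.comp_hasDerivAt (f := fun r : ℝ => ((c - r, r) : ℝ × ℝ)) s hdiff h1
    have hsplit : D (-1, 1) = D (0, 1) - D (1, 0) := by
      have : ((-1 : ℝ), (1 : ℝ)) = ((0 : ℝ), (1 : ℝ)) - ((1 : ℝ), (0 : ℝ)) := by
        simp [Prod.ext_iff]
      rw [this, map_sub]
    have hval : D (0, 1) - D (1, 0)
        = -(g 0 s / ∫ y in Ioi (0:ℝ), g y s) * g (c - s) s := by
      rw [← hpt.deriv, ← hpx.deriv]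
      exact hpde (c - s) hx s hs
    rw [← hval, ← hsplit]
    exact hcomp
  -- continuity along characteristics
  have hchar_cont : ∀ c t : ℝ, 0 < c - t → 0 ≤ t → t ≤ T →
      ContinuousOn (fun r => g (c - r) r) (Icc 0 t) := by
    intro c t h1 h2 h3
    have hmap : MapsTo (fun r : ℝ => ((c - r, r) : ℝ × ℝ)) (Icc 0 t)
        (Ioi 0 ×ˢ Icc 0 T) := by
      intro r hr
      refine ⟨?_, hr.1, hr.2.trans h3⟩
      have : r ≤ t := hr.2
      simp only [mem_Ioi]
      linarith
    exact hGcont.comp ((continuous_const.sub continuous_id).prodMk continuous_id).continuousOn hmap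
  -- nonnegativity of the boundary value
  have hb_nonneg : ∀ s ∈ Icc (0:ℝ) T, 0 ≤ g 0 s := by
    intro s hs
    refine ge_of_tendsto (hbdry s hs) ?_
    filter_upwards [self_mem_nhdsWithin] with x hx
    exact hgnonneg x hx s hs
  -- monotonicity along characteristics
  have hchar_anti : ∀ c t : ℝ, 0 < c - t → 0 < t → t ≤ T →
      AntitoneOn (fun r => g (c - r) r) (Icc 0 t) := by
    intro c t h1 h2 h3
    apply antitoneOn_of_deriv_nonpos (convex_Icc 0 t) (hchar_cont c t h1 h2.le h3)
    · intro s hs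
      rw [interior_Icc] at hs
      have hs' : s ∈ Ioo 0 T := ⟨hs.1, lt_of_lt_of_le hs.2 h3⟩
      exact (hchain c s (by linarith [hs.2]) hs').differentiableAt.differentiableWithinAt
    · intro s hs
      rw [interior_Icc] at hs
      have hs' : s ∈ Ioo 0 T := ⟨hs.1, lt_of_lt_of_le hs.2 h3⟩
      have hder := (hchain c s (by linarith [hs.2]) hs').deriv
      rw [hder]
      have hcs : (0:ℝ) < c - s := by linarith [hs.2]
      have hnn : 0 ≤ g (c - s) s := hgnonneg _ hcs _ ⟨hs'.1.le, hs'.2.le⟩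
      have hb := hb_nonneg s ⟨hs'.1.le, hs'.2.le⟩
      have hm := (hgmass s ⟨hs'.1.le, hs'.2.le⟩).le
      have := mul_nonneg (div_nonneg hb hm) hnn
      linarith
  -- the key identity: the PDE coefficient is f0 s / ρ s
  have hlambda : ∀ s ∈ Ioo (0:ℝ) T,
      g 0 s / ∫ y in Ioi (0:ℝ), g y s = f0 s / ρ s := by
    intro t₀ ht₀
    have ht₀Icc : t₀ ∈ Icc (0:ℝ) T := ⟨ht₀.1.le, ht₀.2.le⟩
    -- find a point of positivity at time t₀
    obtain ⟨y, hy0, hygt⟩ : ∃ y ∈ Ioi (0:ℝ), 0 < g y t₀ := by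
      by_contra h
      push_neg at h
      have hzero : ∀ x ∈ Ioi (0:ℝ), g x t₀ = 0 := fun x hx =>
        le_antisymm (h x hx) (hgnonneg x hx t₀ ht₀Icc)
      have : ∫ x in Ioi (0:ℝ), g x t₀ = 0 := by
        rw [setIntegral_congr_fun measurableSet_Ioi hzero]
        simp
      linarith [hgmass t₀ ht₀Icc]
    -- the reference characteristic is positive
    have hy0' : (0:ℝ) < y := hy0
    have hcy : 0 < y + t₀ - t₀ := by linarith
    have hanti := hchar_anti (y + t₀) t₀ hcy ht₀.1 ht₀.2.le
    have hvpos : ∀ r ∈ Icc (0:ℝ) t₀, 0 < g (y + t₀ - r) r := by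
      intro r hr
      have := hanti hr (right_mem_Icc.2 ht₀.1.le) hr.2
      simp only [sub_self] at this
      have h2 : g (y + t₀ - t₀) t₀ = g y t₀ := by norm_num
      calc (0:ℝ) < g y t₀ := hygt
        _ = g (y + t₀ - t₀) t₀ := h2.symm
        _ ≤ g (y + t₀ - r) r := this
    have hv0 : g (y + t₀ - 0) 0 = f0 (y + t₀) := by
      rw [sub_zero]; exact hinit _ (by simp only [mem_Ioi]; linarith [hy0', ht₀.1])
    have hf0y : 0 < f0 (y + t₀) := by
      rw [← hv0]; exact hvpos 0 (left_mem_Icc.2 ht₀.1.le)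
    -- representation at time t₀
    have hrep : ∀ x : ℝ, 0 < x →
        g x t₀ * f0 (y + t₀) = f0 (x + t₀) * g y t₀ := by
      intro x hx
      have hcx : 0 < x + t₀ - t₀ := by linarith
      have key := ratio_const (u := fun r => g (x + t₀ - r) r)
        (v := fun r => g (y + t₀ - r) r)
        (k := fun s => -(g 0 s / ∫ y in Ioi (0:ℝ), g y s)) ht₀.1
        (hchar_cont (x + t₀) t₀ hcx ht₀.1.le ht₀.2.le)
        (hchar_cont (y + t₀) t₀ hcy ht₀.1.le ht₀.2.le)
        (fun s hs => hchain (x + t₀) s (by linarith [hs.2]) ⟨hs.1, hs.2.trans ht₀.2⟩)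
        (fun s hs => hchain (y + t₀) s (by linarith [hs.2]) ⟨hs.1, hs.2.trans ht₀.2⟩)
        hvpos
      simp only [add_sub_cancel_right, sub_zero] at key
      rw [hinit (x + t₀) (by simp only [mem_Ioi]; linarith [ht₀.1]),
        hinit (y + t₀) (by simp only [mem_Ioi]; linarith [hy0', ht₀.1])] at key
      exact key
    set c₀ : ℝ := g y t₀ / f0 (y + t₀) with hc₀
    have hc₀pos : 0 < c₀ := div_pos hygt hf0y
    have hrep' : ∀ x : ℝ, 0 < x → g x t₀ = c₀ * f0 (x + t₀) := by
      intro x hx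
      have := hrep x hx
      rw [hc₀]
      field_simp
      linarith
    -- boundary value
    have hbval : g 0 t₀ = c₀ * f0 t₀ := by
      have h1 : Filter.Tendsto (fun x => g x t₀) (nhdsWithin 0 (Ioi 0)) (nhds (g 0 t₀)) :=
        hbdry t₀ ht₀Icc
      have hf0c : ContinuousAt f0 t₀ :=
        (hf0C1.continuousOn t₀ ht₀.1).continuousAt (isOpen_Ioi.mem_nhds ht₀.1)
      have h2 : Filter.Tendsto (fun x : ℝ => c₀ * f0 (x + t₀)) (nhdsWithin 0 (Ioi 0))
          (nhds (c₀ * f0 t₀)) := by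
        apply Filter.Tendsto.const_mul
        have h3 : Filter.Tendsto (fun x : ℝ => x + t₀) (nhdsWithin 0 (Ioi 0)) (nhds t₀) := by
          have h4 : Filter.Tendsto (fun x : ℝ => x + t₀) (nhds (0:ℝ)) (nhds (0 + t₀)) :=
            (continuous_add_right t₀).tendsto 0
          rw [zero_add] at h4
          exact h4.mono_left nhdsWithin_le_nhds
        exact hf0c.tendsto.comp h3
      have h1' : Filter.Tendsto (fun x => g x t₀) (nhdsWithin 0 (Ioi 0))
          (nhds (c₀ * f0 t₀)) := by
        refine h2.congr' ?_
        filter_upwards [self_mem_nhdsWithin] with x hx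
        exact (hrep' x hx).symm
      exact tendsto_nhds_unique h1 h1'
    -- mass
    have hmass' : ∫ y' in Ioi (0:ℝ), g y' t₀ = c₀ * ρ t₀ := by
      rw [setIntegral_congr_fun measurableSet_Ioi
        (fun x hx => hrep' x hx : EqOn (fun x => g x t₀) (fun x => c₀ * f0 (x + t₀)) (Ioi 0))]
      rw [integral_const_mul, integral_Ioi_comp_add_right' f0 t₀, hρ]
    rw [hbval, hmass', mul_div_mul_left _ _ hc₀pos.ne']
  -- final assembly
  intro x hx t ht
  have hx' : (0:ℝ) < x := hx
  rcases eq_or_lt_of_le ht.1 with h0 | h0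
  · rw [← h0, hinit x hx, hρ0, add_zero, one_mul]
  · -- 0 < t ≤ T
    have key := ratio_const (u := fun r => g (x + t - r) r) (v := ρ)
      (k := fun s => -(f0 s / ρ s)) h0
      (hchar_cont (x + t) t (by linarith) ht.1 ht.2)
      (hρcont.mono (Icc_subset_Icc le_rfl ht.2))
      (fun s hs => by
        have hs' : s ∈ Ioo (0:ℝ) T := ⟨hs.1, lt_of_lt_of_le hs.2 ht.2⟩
        have h1 := hchain (x + t) s (by linarith [hs.2]) hs'
        rw [hlambda s hs'] at h1
        exact h1)
      (fun s hs => by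
        have hs' : s ∈ Ioo (0:ℝ) T := ⟨hs.1, lt_of_lt_of_le hs.2 ht.2⟩
        have h1 := hρderiv s hs'
        have hne : ρ s ≠ 0 := (hρpos s ⟨hs'.1.le, hs'.2.le⟩).ne'
        have h2 : -(f0 s / ρ s) * ρ s = -f0 s := by
          rw [neg_mul, div_mul_cancel₀ _ hne]
        rw [← h2] at h1
        exact h1)
      (fun s hs => hρpos s ⟨hs.1, hs.2.trans ht.2⟩)
    simp only [add_sub_cancel_right, sub_zero] at key
    rw [hρ0, mul_one, hinit (x + t) (by simp only [mem_Ioi]; linarith [hx', h0])] at key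
    rw [key]; ring
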